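/- Let R be a PvMD and P a t-prime ideal of R. The following are equivalent: (i) P is branched; (ii) P is a minimal prime of a nonzero principal ideal; (iii) P is a minimal prime of a nonzero finitely generated ideal; (iv) P is a minimal prime of a v-finite divisorial ideal; (v) P is not the union of the set of primes of R properly contained in P. -/

import Mathlib

/-! Definitions following El Baghdadi–Gabelli, "Ring-theoretic properties of PvMDs".
`A` is an integral domain with quotient field `K`; all star-operation notions are
defined for an algebra `A → K` (instantiated with `K = FractionRing A`). -/

namespace Paper

section NoField

variable (A : Type*) [CommRing A]

/-- Finite character: every nonzero nonunit lies in only finitely many maximal ideals. -/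
def FiniteCharacter : Prop :=
  ∀ x : A, x ≠ 0 → ¬ IsUnit x → {M : Ideal A | M.IsMaximal ∧ x ∈ M}.Finite

/-- Ascending chain condition on radical ideals. -/
def ACCRadical : Prop :=
  ∀ f : ℕ →o Ideal A, (∀ n, (f n).IsRadical) → ∃ n, ∀ m, n ≤ m → f m = f n

/-- `P` is a branched prime: there is a `P`-primary ideal different from `P`. -/
def IsBranched (P : Ideal A) : Prop :=
  P.IsPrime ∧ P ≠ ⊥ ∧ ∃ Q : Ideal A, Q.IsPrimary ∧ Q.radical = P ∧ Q ≠ P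

/-- `P` is a height-one prime of the domain `A`. -/
def HeightOne (P : Ideal A) : Prop :=
  P.IsPrime ∧ P ≠ ⊥ ∧ ∀ Q : Ideal A, Q.IsPrime → Q < P → Q = ⊥

end NoField

section Generic

variable (A : Type*) (K : Type*) [CommRing A] [CommRing K] [Algebra A K]

/-- The image of an ideal `I` of `A` in `K`, as an `A`-submodule of `K`. -/
def sub (I : Ideal A) : Submodule A K := Submodule.map (Algebra.linearMap A K) I

/-- The dual `(A : E) = {x ∈ K : xE ⊆ A}` of an `A`-submodule `E` of `K`. -/
def dual (E : Submodule A K) : Submodule A K := 1 / E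

/-- The `v`-operation `E ↦ (A : (A : E))` on submodules of `K`. -/
def vop (E : Submodule A K) : Submodule A K := dual A K (dual A K E)

/-- The `v`-closure `I_v` of an ideal `I` of `A`, as an ideal of `A`. -/
def vcl (I : Ideal A) : Ideal A := (vop A K (sub A K I)).comap (Algebra.linearMap A K)

/-- The `t`-closure `I_t = ⋃ J_v`, `J` ranging over the nonzero finitely generated
subideals of `I`. -/
def tcl (I : Ideal A) : Ideal A :=
  ⨆ J : {J : Ideal A // J.FG ∧ J ≠ ⊥ ∧ J ≤ I}, vcl A K J.1

/-- A (nonzero) `t`-ideal. -/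
def IsTIdeal (I : Ideal A) : Prop := I ≠ ⊥ ∧ tcl A K I = I

/-- A prime `t`-ideal. -/
def IsTPrime (P : Ideal A) : Prop := P.IsPrime ∧ IsTIdeal A K P

/-- A `t`-maximal ideal: maximal among proper `t`-ideals. -/
def IsTMax (M : Ideal A) : Prop :=
  IsTIdeal A K M ∧ M ≠ ⊤ ∧ ∀ J : Ideal A, IsTIdeal A K J → J ≠ ⊤ → M ≤ J → J = M

/-- The localization `A_P ⊆ K` of `A` at (the complement of) a prime `P`, as a subset of `K`. -/
def locSet (P : Ideal A) : Set K :=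
  {x | ∃ a s : A, s ∉ P ∧ algebraMap A K s * x = algebraMap A K a}

/-- The trace ideal `I(A:I)`, as an ideal of `A`. -/
def traceIdeal (I : Ideal A) : Ideal A :=
  (sub A K I * dual A K (sub A K I)).comap (Algebra.linearMap A K)

/-- `I` is `t`-invertible: `(I(A:I))_t = A`. -/
def IsTInvertible (I : Ideal A) : Prop := tcl A K (traceIdeal A K I) = ⊤

/-- The `t`-radical trace property: for every nonzero ideal `I`, `(I(A:I))_t` is `A`
or a radical ideal. -/
def IsTRTP : Prop :=
  ∀ I : Ideal A, I ≠ ⊥ →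
    tcl A K (traceIdeal A K I) = ⊤ ∨ (tcl A K (traceIdeal A K I)).IsRadical

/-- The radical trace property: for every nonzero ideal `I`, `I(A:I)` is `A`
or a radical ideal. -/
def IsRTP : Prop :=
  ∀ I : Ideal A, I ≠ ⊥ → traceIdeal A K I = ⊤ ∨ (traceIdeal A K I).IsRadical

/-- The `t#`-property. -/
def IsTSharp : Prop :=
  ∀ M₁ M₂ : Set (Ideal A), M₁ ⊆ {M | IsTMax A K M} → M₂ ⊆ {M | IsTMax A K M} →
    M₁ ≠ M₂ → (⋂ M ∈ M₁, locSet A K M) ≠ (⋂ M ∈ M₂, locSet A K M)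

/-- The `t##`-property. -/
def IsTSharpSharp : Prop :=
  ∀ P₁ P₂ : Set (Ideal A), P₁ ⊆ {P | IsTPrime A K P} → P₂ ⊆ {P | IsTPrime A K P} →
    (∀ P ∈ P₁, ∀ Q ∈ P₁, P ≤ Q → P = Q) → (∀ P ∈ P₂, ∀ Q ∈ P₂, P ≤ Q → P = Q) →
    P₁ ≠ P₂ → (⋂ P ∈ P₁, locSet A K P) ≠ (⋂ P ∈ P₂, locSet A K P)

/-- The `#`-property. -/
def IsSharp : Prop :=
  ∀ M₁ M₂ : Set (Ideal A), M₁.Nonempty → M₂.Nonempty →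
    M₁ ⊆ {M | M.IsMaximal} → M₂ ⊆ {M | M.IsMaximal} →
    M₁ ≠ M₂ → (⋂ M ∈ M₁, locSet A K M) ≠ (⋂ M ∈ M₂, locSet A K M)

/-- Ascending chain condition on radical `t`-ideals. -/
def ACCRadicalT : Prop :=
  ∀ f : ℕ →o Ideal A, (∀ n, IsTIdeal A K (f n) ∧ (f n).IsRadical) →
    ∃ n, ∀ m, n ≤ m → f m = f n

/-- Ascending chain condition on prime `t`-ideals. -/
def ACCPrimeT : Prop :=
  ∀ f : ℕ →o Ideal A, (∀ n, IsTPrime A K (f n)) → ∃ n, ∀ m, n ≤ m → f m = f n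

/-- `t`-finite character: every nonzero nonunit lies in only finitely many
`t`-maximal ideals. -/
def TFiniteCharacter : Prop :=
  ∀ x : A, x ≠ 0 → ¬ IsUnit x → {M : Ideal A | IsTMax A K M ∧ x ∈ M}.Finite

/-- Weakly Matlis: `t`-finite character and every `t`-prime is contained in a unique
`t`-maximal ideal. -/
def IsWeaklyMatlis : Prop :=
  TFiniteCharacter A K ∧ ∀ P : Ideal A, IsTPrime A K P → ∃! M : Ideal A, IsTMax A K M ∧ P ≤ M

/-- h-local: finite character and every nonzero prime is contained in a unique
maximal ideal. -/
def IsHLocal : Prop :=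
  FiniteCharacter A ∧
    ∀ P : Ideal A, P.IsPrime → P ≠ ⊥ → ∃! M : Ideal A, M.IsMaximal ∧ P ≤ M

/-- Prüfer domain: every nonzero finitely generated ideal is invertible. -/
def IsPruferD : Prop :=
  ∀ I : Ideal A, I ≠ ⊥ → I.FG → sub A K I * dual A K (sub A K I) = 1

/-- Strongly discrete Prüfer domain: `P ≠ P²` for all nonzero primes. -/
def IsSDPrufer : Prop :=
  IsPruferD A K ∧ ∀ P : Ideal A, P.IsPrime → P ≠ ⊥ → P * P ≠ P

/-- Generalized Dedekind domain. -/
def IsGenDedekind : Prop := IsSDPrufer A K ∧ ACCRadical A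

/-- Divisorial domain: every nonzero ideal is divisorial. -/
def IsDivisorialDomain : Prop := ∀ I : Ideal A, I ≠ ⊥ → vcl A K I = I

/-- Stable domain: every nonzero ideal `J` satisfies `J((J:J):J) = (J:J)`. -/
def IsStableDomain : Prop :=
  ∀ J : Ideal A, J ≠ ⊥ →
    sub A K J * ((sub A K J / sub A K J) / sub A K J) = sub A K J / sub A K J

/-- The `w`-operation (as a semistar operation): `E_w = ⋂_{M ∈ t-Max(A)} E A_M`,
computed as a subset of `K`. -/
def wSet (E : Submodule A K) : Set K :=
  ⋂ M ∈ {M : Ideal A | IsTMax A K M}, {x : K | ∃ s : A, s ∉ M ∧ s • x ∈ E}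

/-- A (nonzero) `w`-ideal: `I = I_w`. -/
def IsWIdeal (I : Ideal A) : Prop := I ≠ ⊥ ∧ wSet A K (sub A K I) = (sub A K I : Set K)

/-- The endomorphism ring `E(I) = (I : I)`, as a submodule of `K`. -/
def eRing (I : Ideal A) : Submodule A K := sub A K I / sub A K I

/-- `I` is a `w`-stable ideal: `(I(E(I):I))_w = E(I)`. -/
def IsWStableIdeal (I : Ideal A) : Prop :=
  wSet A K (sub A K I * (eRing A K I / sub A K I)) = (eRing A K I : Set K)

/-- `A` is `w`-stable: every `w`-ideal is `w`-stable. -/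
def IsWStable : Prop := ∀ I : Ideal A, IsWIdeal A K I → IsWStableIdeal A K I

/-- `A` is `w`-divisorial: `I_w = I_v` for every nonzero ideal. -/
def IsWDivisorial : Prop :=
  ∀ I : Ideal A, I ≠ ⊥ → wSet A K (sub A K I) = ((vop A K (sub A K I) : Submodule A K) : Set K)

/-- The endomorphism ring `E(I) = (I : I)` as a subalgebra of `K`. -/
def eSubalgebra (I : Ideal A) : Subalgebra A K where
  carrier := {x : K | ∀ y ∈ sub A K I, x * y ∈ sub A K I}
  mul_mem' := by
    intro a b ha hb y hy
    rw [mul_assoc]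
    exact ha _ (hb _ hy)
  one_mem' := by
    intro y hy
    rw [one_mul]; exact hy
  add_mem' := by
    intro a b ha hb y hy
    rw [add_mul]
    exact Submodule.add_mem _ (ha _ hy) (hb _ hy)
  zero_mem' := by
    intro y hy
    rw [zero_mul]
    exact Submodule.zero_mem _
  algebraMap_mem' := by
    intro r y hy
    rw [← Algebra.smul_def]
    exact Submodule.smul_mem _ r hy

end Generic

section Domain

variable (R : Type*) [CommRing R] [IsDomain R]

/-- A Prüfer `v`-multiplication domain: the localization at every `t`-maximal ideal
is a valuation domain. -/
def IsPvMD : Prop :=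
  ∀ M : Ideal R, IsTMax R (FractionRing R) M →
    ∃ _ : M.IsPrime, ValuationRing (Localization.AtPrime M)

/-- A strongly discrete PvMD: `(P²)_t ≠ P` for every `t`-prime `P`. -/
def IsSDPvMD : Prop :=
  IsPvMD R ∧ ∀ P : Ideal R, IsTPrime R (FractionRing R) P →
    tcl R (FractionRing R) (P * P) ≠ P

/-- A generalized Krull domain: a strongly discrete PvMD with ACC on radical
`t`-ideals. -/
def IsGenKrull : Prop := IsSDPvMD R ∧ ACCRadicalT R (FractionRing R)

/-- An almost Krull domain: the localization at every `t`-maximal ideal is a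
rank-one discrete valuation ring. -/
def IsAlmostKrull : Prop :=
  ∀ M : Ideal R, IsTMax R (FractionRing R) M →
    ∃ _ : M.IsPrime, IsDiscreteValuationRing (Localization.AtPrime M)

/-- A Krull domain: `R = ⋂ R_P` over the height-one primes, each such localization
is a DVR, and every nonzero element lies in only finitely many height-one primes. -/
def IsKrull : Prop :=
  (((1 : Submodule R (FractionRing R)) : Set (FractionRing R)) =
      ⋂ P ∈ {P : Ideal R | HeightOne R P}, locSet R (FractionRing R) P) ∧
    (∀ P : Ideal R, HeightOne R P →
      ∃ _ : P.IsPrime, IsDiscreteValuationRing (Localization.AtPrime P)) ∧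
    ∀ x : R, x ≠ 0 → {P : Ideal R | HeightOne R P ∧ x ∈ P}.Finite

end Domain


section CommRingNagata

variable (R : Type*) [CommRing R]

/-- The multiplicative set `N_t = {f ∈ R[X] : (c(f))_t = R}` (it is multiplicatively
closed, so taking the closure does not change it). -/
noncomputable def NtMonoid : Submonoid (Polynomial R) :=
  Submonoid.closure
    {f : Polynomial R | tcl R (FractionRing R) (Ideal.span (Set.range f.coeff)) = ⊤}

/-- The `t`-Nagata ring `R⟨X⟩ = R[X]_{N_t}`. -/
def tNagata : Type _ := Localization (NtMonoid R)

noncomputable instance : CommRing (tNagata R) :=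
  inferInstanceAs (CommRing (Localization (NtMonoid R)))

/-- The `##`-property: every overring is a `#`-domain. -/
def IsSharpSharp : Prop :=
  ∀ T : Subalgebra R (FractionRing R), IsSharp ↥T (FractionRing R)


end CommRingNagata

end Paper


namespace Paper

variable (R : Type*) [CommRing R] [IsDomain R]

local notation "KK" => FractionRing R


section Helpers

variable {R : Type*} [CommRing R] [IsDomain R]

lemma one_not_mem_prime {P : Ideal R} (hp : P.IsPrime) : (1 : R) ∉ P :=
  fun h => hp.ne_top (Ideal.eq_top_of_isUnit_mem _ h isUnit_one)

/-- Saturation of the ideal `I` at the prime `P`: the contraction of `I R_P`. -/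
def sat (P : Ideal R) (hp : P.IsPrime) (I : Ideal R) : Ideal R where
  carrier := {x | ∃ s, s ∉ P ∧ s * x ∈ I}
  zero_mem' := ⟨1, one_not_mem_prime hp, by simpa using I.zero_mem⟩
  add_mem' := by
    rintro x y ⟨s, hs, hsx⟩ ⟨t, ht, hty⟩
    refine ⟨s * t, fun h => (hp.mem_or_mem h).elim hs ht, ?_⟩
    have h1 : s * t * (x + y) = t * (s * x) + s * (t * y) := by ring
    rw [h1]
    exact I.add_mem (I.mul_mem_left _ hsx) (I.mul_mem_left _ hty)
  smul_mem' := by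
    rintro c x ⟨s, hs, hsx⟩
    refine ⟨s, hs, ?_⟩
    rw [smul_eq_mul, show s * (c * x) = c * (s * x) by ring]
    exact I.mul_mem_left _ hsx

lemma mem_sat {P : Ideal R} (hp : P.IsPrime) {I : Ideal R} {x : R} :
    x ∈ sat P hp I ↔ ∃ s, s ∉ P ∧ s * x ∈ I := Iff.rfl

lemma le_sat (P : Ideal R) (hp : P.IsPrime) (I : Ideal R) : I ≤ sat P hp I :=
  fun x hx => (mem_sat hp).mpr ⟨1, one_not_mem_prime hp, by simpa using hx⟩

lemma sat_le_prime {P : Ideal R} (hp : P.IsPrime) {q I : Ideal R} (hq : q.IsPrime)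
    (hqP : q ≤ P) (hIq : I ≤ q) : sat P hp I ≤ q := by
  intro x hx
  obtain ⟨s, hs, hsx⟩ := (mem_sat hp).mp hx
  rcases hq.mem_or_mem (hIq hsx) with h | h
  · exact absurd (hqP h) hs
  · exact h

lemma le_vcl (J : Ideal R) : J ≤ vcl R (FractionRing R) J := by
  intro x hx
  rw [vcl, Submodule.mem_comap]
  simp only [vop, dual]
  rw [Submodule.mem_div_iff_forall_mul_mem]
  intro y hy
  rw [Submodule.mem_div_iff_forall_mul_mem] at hy
  rw [mul_comm]
  exact hy _ ⟨x, hx, rfl⟩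

lemma vcl_le_tcl {J I : Ideal R} (hfg : J.FG) (h0 : J ≠ ⊥) (hle : J ≤ I) :
    vcl R (FractionRing R) J ≤ tcl R (FractionRing R) I :=
  le_iSup (fun J : {J : Ideal R // J.FG ∧ J ≠ ⊥ ∧ J ≤ I} =>
    vcl R (FractionRing R) J.1) ⟨J, hfg, h0, hle⟩

lemma le_tcl (I : Ideal R) : I ≤ tcl R (FractionRing R) I := by
  intro x hx
  by_cases hx0 : x = 0
  · rw [hx0]; exact zero_mem _
  · exact vcl_le_tcl (Submodule.fg_span_singleton x)
      (fun h => hx0 (Ideal.span_singleton_eq_bot.mp h))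
      ((Ideal.span_singleton_le_iff_mem _).mpr hx)
      (le_vcl _ (Ideal.mem_span_singleton_self x))

lemma exists_tmax {P : Ideal R} (hPt : IsTIdeal R (FractionRing R) P) (hPtop : P ≠ ⊤) :
    ∃ M : Ideal R, IsTMax R (FractionRing R) M ∧ P ≤ M := by
  have hub : ∀ c ⊆ {I : Ideal R | IsTIdeal R (FractionRing R) I ∧ I ≠ ⊤},
      IsChain (· ≤ ·) c → ∀ y ∈ c,
      ∃ ub ∈ {I : Ideal R | IsTIdeal R (FractionRing R) I ∧ I ≠ ⊤}, ∀ z ∈ c, z ≤ ub := by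
    intro c hcs hchain y hy
    refine ⟨sSup c, ⟨⟨?_, ?_⟩, ?_⟩, fun z hz => le_sSup hz⟩
    · intro h
      exact (hcs hy).1.1 (le_bot_iff.mp (h ▸ le_sSup hy))
    · refine le_antisymm ?_ (le_tcl _)
      refine iSup_le ?_
      rintro ⟨J, hfg, hJ0, hJle⟩
      obtain ⟨I, hIc, hJI⟩ :=
        (CompleteLattice.isCompactElement_iff_le_of_directed_sSup_le _ J).mp
          ((Submodule.fg_iff_compact J).mp hfg) c ⟨y, hy⟩ hchain.directedOn hJle
      exact le_trans (le_trans (vcl_le_tcl hfg hJ0 hJI) (le_of_eq (hcs hIc).1.2)) (le_sSup hIc)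
    · intro h
      have h1 : (1 : R) ∈ sSup c := h ▸ Submodule.mem_top
      obtain ⟨I, hIc, hI1⟩ := (Submodule.mem_sSup_of_directed ⟨y, hy⟩ hchain.directedOn).mp h1
      exact (hcs hIc).2 (Ideal.eq_top_of_isUnit_mem _ hI1 isUnit_one)
  obtain ⟨m, hPm, hm⟩ := zorn_le_nonempty₀
    {I : Ideal R | IsTIdeal R (FractionRing R) I ∧ I ≠ ⊤} hub P ⟨hPt, hPtop⟩
  exact ⟨m, ⟨hm.1.1, hm.1.2, fun J hJ hJtop hmJ =>
    le_antisymm (hm.2 ⟨hJ, hJtop⟩ hmJ) hmJ⟩, hPm⟩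

lemma mem_sat_of_loc {P M : Ideal R} (hp : P.IsPrime) [hM : M.IsPrime] (hPM : P ≤ M)
    {u v : R} (c : Localization.AtPrime M)
    (h : algebraMap R (Localization.AtPrime M) u * c = algebraMap R (Localization.AtPrime M) v) :
    v ∈ sat P hp (Ideal.span {u}) := by
  obtain ⟨⟨r, s⟩, hrs⟩ := IsLocalization.surj M.primeCompl c
  have heq : algebraMap R (Localization.AtPrime M) (v * s) =
      algebraMap R (Localization.AtPrime M) (u * r) := by
    rw [map_mul, map_mul, ← h, mul_assoc, hrs]
  rw [IsLocalization.eq_iff_exists M.primeCompl] at heq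
  obtain ⟨w, hw⟩ := heq
  refine (mem_sat hp).mpr ⟨(w : R) * s, fun hmem => ?_, ?_⟩
  · rcases hM.mem_or_mem (hPM hmem) with h1 | h1
    · exact w.2 h1
    · exact s.2 h1
  · rw [Ideal.mem_span_singleton]
    exact ⟨(w : R) * r, by linear_combination hw⟩

lemma sat_total (hR : IsPvMD R) {P : Ideal R} (hP : IsTPrime R (FractionRing R) P) (a b : R) :
    b ∈ sat P hP.1 (Ideal.span {a}) ∨ a ∈ sat P hP.1 (Ideal.span {b}) := by
  obtain ⟨M, hM, hPM⟩ := exists_tmax hP.2 hP.1.ne_top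
  obtain ⟨hMp, hval⟩ := hR M hM
  haveI := hMp
  haveI := hval
  obtain ⟨c, hc | hc⟩ := ValuationRing.cond (algebraMap R (Localization.AtPrime M) a)
    (algebraMap R (Localization.AtPrime M) b)
  · exact Or.inl (mem_sat_of_loc hP.1 hPM c hc)
  · exact Or.inr (mem_sat_of_loc hP.1 hPM c hc)

lemma pow_mem_sat (hR : IsPvMD R) {P : Ideal R} (hP : IsTPrime R (FractionRing R) P) {a : R}
    (hmin : P ∈ (Ideal.span {a} : Ideal R).minimalPrimes) {x : R} (hx : x ∈ P) :
    ∃ n : ℕ, x ^ n ∈ sat P hP.1 (Ideal.span {a * a}) := by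
  by_contra hcon
  push_neg at hcon
  have hx0 : x ≠ 0 := by
    rintro rfl
    exact hcon 1 (by rw [pow_one]; exact zero_mem _)
  set Q0 : Ideal R := ⨅ n : ℕ, sat P hP.1 (Ideal.span {x ^ n}) with hQ0def
  have hmem : ∀ z : R, z ∈ Q0 ↔ ∀ n : ℕ, z ∈ sat P hP.1 (Ideal.span {x ^ n}) := by
    intro z; rw [hQ0def]; exact Submodule.mem_iInf _
  have haQ0 : a * a ∈ Q0 := by
    rw [hmem]
    intro n
    rcases sat_total hR hP (x ^ n) (a * a) with h | h
    · exact h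
    · exact absurd h (hcon n)
  have hQ0P : Q0 ≤ P := by
    intro z hz
    obtain ⟨s, hs, hsz⟩ := (mem_sat hP.1).mp ((hmem z).mp hz 1)
    rw [pow_one, Ideal.mem_span_singleton] at hsz
    obtain ⟨t, ht⟩ := hsz
    have hszP : s * z ∈ P := ht ▸ P.mul_mem_right t hx
    exact (hP.1.mem_or_mem hszP).resolve_left hs
  have hxQ0 : x ∉ Q0 := by
    intro hxm
    obtain ⟨s, hs, hsx⟩ := (mem_sat hP.1).mp ((hmem x).mp hxm 2)
    rw [Ideal.mem_span_singleton] at hsx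
    obtain ⟨t, ht⟩ := hsx
    have hst : s = x * t := mul_left_cancel₀ hx0 (by linear_combination ht)
    exact hs (hst ▸ P.mul_mem_right t hx)
  have hQ0prime : Q0.IsPrime := by
    rw [Ideal.isPrime_iff]
    constructor
    · intro htop
      obtain ⟨s, hs, hsz⟩ := (mem_sat hP.1).mp ((hmem 1).mp (htop ▸ Submodule.mem_top) 2)
      rw [mul_one, Ideal.mem_span_singleton] at hsz
      obtain ⟨t, ht⟩ := hsz
      exact hs (ht ▸ P.mul_mem_right t (Ideal.pow_mem_of_mem P hx 2 (by norm_num)))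
    · intro b c hbc
      by_cases hbQ : b ∈ Q0
      · exact Or.inl hbQ
      · right
        have hb0 : b ≠ 0 := fun h => hbQ (h ▸ Q0.zero_mem)
        rw [hmem] at hbQ
        push_neg at hbQ
        obtain ⟨m, hm⟩ := hbQ
        have hbx : x ^ m ∈ sat P hP.1 (Ideal.span {b}) :=
          (sat_total hR hP b (x ^ m)).resolve_right hm
        obtain ⟨s, hs, hsxm⟩ := (mem_sat hP.1).mp hbx
        rw [Ideal.mem_span_singleton] at hsxm
        obtain ⟨r, hr⟩ := hsxm
        rw [hmem]
        intro n
        obtain ⟨t, ht, htbc⟩ := (mem_sat hP.1).mp ((hmem _).mp hbc (m + n))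
        rw [Ideal.mem_span_singleton] at htbc
        obtain ⟨w, hw⟩ := htbc
        refine (mem_sat hP.1).mpr ⟨s * t, fun hmem2 => (hP.1.mem_or_mem hmem2).elim hs ht, ?_⟩
        rw [Ideal.mem_span_singleton]
        refine ⟨w * r, ?_⟩
        have key : b * (s * t * c) = b * (x ^ n * (w * r)) := by
          have hpow : x ^ (m + n) = x ^ m * x ^ n := pow_add x m n
          calc b * (s * t * c) = s * (t * (b * c)) := by ring
          _ = s * (x ^ (m + n) * w) := by rw [hw]
          _ = s * x ^ m * x ^ n * w := by rw [hpow]; ring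
          _ = b * r * x ^ n * w := by rw [hr]
          _ = b * (x ^ n * (w * r)) := by ring
        exact mul_left_cancel₀ hb0 key
  have haQ0' : a ∈ Q0 := (hQ0prime.mem_or_mem haQ0).elim id id
  have hPQ0 := hmin.2 ⟨hQ0prime, (Ideal.span_singleton_le_iff_mem _).mpr haQ0'⟩ hQ0P
  exact hxQ0 (hPQ0 hx)

lemma branched_of_min_principal (hR : IsPvMD R) {P : Ideal R}
    (hP : IsTPrime R (FractionRing R) P) {a : R} (ha0 : a ≠ 0)
    (hmin : P ∈ (Ideal.span {a} : Ideal R).minimalPrimes) : IsBranched R P := by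
  have hp := hP.1
  have haP : a ∈ P := (Ideal.span_singleton_le_iff_mem _).mp hmin.1.2
  set Q := sat P hp (Ideal.span {a * a}) with hQdef
  have hQP : Q ≤ P := sat_le_prime hp hp le_rfl
    ((Ideal.span_singleton_le_iff_mem _).mpr (P.mul_mem_right a haP))
  have hrad : Q.radical = P := by
    apply le_antisymm
    · exact le_trans (Ideal.radical_mono hQP) (le_of_eq hp.radical)
    · intro x hx
      obtain ⟨n, hn⟩ := pow_mem_sat hR hP hmin hx
      exact Ideal.mem_radical_iff.mpr ⟨n, hn⟩
  refine ⟨hp, hP.2.1, Q, ?_, hrad, ?_⟩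
  · rw [Ideal.isPrimary_iff]
    refine ⟨fun h => hp.ne_top (top_le_iff.mp (h ▸ hQP)), ?_⟩
    intro x y hxy
    by_cases hy : y ∈ P
    · exact Or.inr (hrad ▸ hy)
    · left
      obtain ⟨s, hs, hsxy⟩ := (mem_sat hp).mp hxy
      exact (mem_sat hp).mpr ⟨s * y, fun hm => (hp.mem_or_mem hm).elim hs hy,
        by rw [show s * y * x = s * (x * y) by ring]; exact hsxy⟩
  · intro hQeq
    have haQ : a ∈ Q := by rw [hQeq]; exact haP
    obtain ⟨s, hs, hsa⟩ := (mem_sat hp).mp haQ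
    rw [Ideal.mem_span_singleton] at hsa
    obtain ⟨t, ht⟩ := hsa
    have hst : s = a * t := mul_left_cancel₀ ha0 (by linear_combination ht)
    exact hs (hst ▸ P.mul_mem_right t haP)

lemma prime_le_primary (hR : IsPvMD R) {P : Ideal R} (hP : IsTPrime R (FractionRing R) P)
    {Q : Ideal R} (hQ : Q.IsPrimary) (hrad : Q.radical = P)
    {q : Ideal R} (hq : q.IsPrime) (hlt : q < P) : q ≤ Q := by
  obtain ⟨y, hyP, hyq⟩ := SetLike.exists_of_lt hlt
  intro x hx
  have key : ∀ n : ℕ, ∃ s, s ∉ P ∧ s * x ∈ Ideal.span {y ^ n} := by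
    intro n
    induction n with
    | zero => exact ⟨1, one_not_mem_prime hP.1,
        by rw [pow_zero, Ideal.span_singleton_one]; exact Submodule.mem_top⟩
    | succ n ih =>
      obtain ⟨s, hs, hsx⟩ := ih
      rw [Ideal.mem_span_singleton] at hsx
      obtain ⟨r, hr⟩ := hsx
      rcases sat_total hR hP y r with h | h
      · obtain ⟨t, ht, htr⟩ := (mem_sat hP.1).mp h
        rw [Ideal.mem_span_singleton] at htr
        obtain ⟨u, hu⟩ := htr
        refine ⟨t * s, fun hm => (hP.1.mem_or_mem hm).elim ht hs, ?_⟩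
        rw [Ideal.mem_span_singleton]
        exact ⟨u, by rw [pow_succ]; linear_combination t * hr + y ^ n * hu⟩
      · exfalso
        obtain ⟨t, ht, hty⟩ := (mem_sat hP.1).mp h
        rw [Ideal.mem_span_singleton] at hty
        obtain ⟨u, hu⟩ := hty
        have hrq : r ∈ q := by
          have h1 : y ^ n * r ∈ q := hr ▸ q.mul_mem_left s hx
          exact (hq.mem_or_mem h1).resolve_left (fun h2 => hyq (hq.mem_of_pow_mem n h2))
        have h2 : t * y ∈ q := hu ▸ q.mul_mem_right u hrq
        rcases hq.mem_or_mem h2 with h3 | h3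
        · exact ht (hlt.le h3)
        · exact hyq h3
  have hyrad : y ∈ Q.radical := by rw [hrad]; exact hyP
  obtain ⟨n, hyn⟩ := Ideal.mem_radical_iff.mp hyrad
  obtain ⟨s, hs, hsx⟩ := key n
  have hxs : x * s ∈ Q := by
    rw [mul_comm]
    exact (Ideal.span_singleton_le_iff_mem Q).mpr hyn hsx
  rcases (Ideal.isPrimary_iff.mp hQ).2 hxs with h | h
  · exact h
  · exact absurd (hrad ▸ h) hs

lemma sat_span_le {P : Ideal R} (hp : P.IsPrime) {a x : R}
    (h : a ∈ sat P hp (Ideal.span {x})) :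
    sat P hp (Ideal.span {a}) ≤ sat P hp (Ideal.span {x}) := by
  intro z hz
  obtain ⟨s, hs, hsz⟩ := (mem_sat hp).mp hz
  rw [Ideal.mem_span_singleton] at hsz
  obtain ⟨t, ht⟩ := hsz
  obtain ⟨u, hu, hua⟩ := (mem_sat hp).mp h
  rw [Ideal.mem_span_singleton] at hua
  obtain ⟨v, hv⟩ := hua
  refine (mem_sat hp).mpr ⟨u * s, fun hm => (hp.mem_or_mem hm).elim hu hs, ?_⟩
  rw [Ideal.mem_span_singleton]
  exact ⟨v * t, by linear_combination u * ht + t * hv⟩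

lemma exists_dominating_gen (hR : IsPvMD R) {P : Ideal R}
    (hP : IsTPrime R (FractionRing R) P) (S : Finset R) :
    ∃ a ∈ Ideal.span (S : Set R), Ideal.span (S : Set R) ≤ sat P hP.1 (Ideal.span {a}) := by
  classical
  induction S using Finset.induction_on with
  | empty =>
    refine ⟨0, zero_mem _, ?_⟩
    rw [Finset.coe_empty, Ideal.span_empty]
    exact bot_le
  | @insert x S hxS ih =>
    obtain ⟨a, haS, hle⟩ := ih
    have hsub : (S : Set R) ⊆ ((insert x S : Finset R) : Set R) := by
      intro z hz
      simp only [Finset.coe_insert, Set.mem_insert_iff]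
      exact Or.inr hz
    rcases sat_total hR hP a x with h | h
    · refine ⟨a, Ideal.span_mono hsub haS, ?_⟩
      rw [Finset.coe_insert, Ideal.span_insert]
      exact sup_le ((Ideal.span_singleton_le_iff_mem _).mpr h) hle
    · refine ⟨x, Ideal.subset_span (Finset.mem_coe.mpr (Finset.mem_insert_self x S)), ?_⟩
      rw [Finset.coe_insert, Ideal.span_insert]
      exact sup_le (le_sat _ _ _) (le_trans hle (sat_span_le hP.1 h))

lemma exists_denominator {P : Ideal R} (hp : P.IsPrime) (S : Finset R) {I : Ideal R}
    (h : Ideal.span (S : Set R) ≤ sat P hp I) :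
    ∃ s, s ∉ P ∧ ∀ b ∈ Ideal.span (S : Set R), s * b ∈ I := by
  classical
  induction S using Finset.induction_on with
  | empty =>
    refine ⟨1, one_not_mem_prime hp, ?_⟩
    intro b hb
    rw [Finset.coe_empty, Ideal.span_empty, Ideal.mem_bot] at hb
    rw [hb, mul_zero]
    exact zero_mem _
  | @insert x S hxS ih =>
    have hsub : (S : Set R) ⊆ ((insert x S : Finset R) : Set R) := by
      intro z hz
      simp only [Finset.coe_insert, Set.mem_insert_iff]
      exact Or.inr hz
    obtain ⟨s, hs, hsall⟩ := ih (le_trans (Ideal.span_mono hsub) h)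
    obtain ⟨t, ht, htx⟩ := (mem_sat hp).mp (h (Ideal.subset_span (Finset.mem_coe.mpr (Finset.mem_insert_self x S))))
    refine ⟨s * t, fun hm => (hp.mem_or_mem hm).elim hs ht, ?_⟩
    intro b hb
    rw [Finset.coe_insert, Ideal.span_insert] at hb
    obtain ⟨b1, hb1, b2, hb2, rfl⟩ := Submodule.mem_sup.mp hb
    rw [Ideal.mem_span_singleton] at hb1
    obtain ⟨c, rfl⟩ := hb1
    have h1 : s * t * (x * c + b2) = s * c * (t * x) + t * (s * b2) := by ring
    rw [h1]
    exact I.add_mem (I.mul_mem_left _ htx) (I.mul_mem_left _ (hsall b2 hb2))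

lemma vcl_le_sat {P : Ideal R} (hp : P.IsPrime) {J : Ideal R} {a s : R}
    (ha0 : a ≠ 0) (hs : s ∉ P) (hsall : ∀ b ∈ J, s * b ∈ Ideal.span {a}) :
    vcl R (FractionRing R) J ≤ sat P hp (Ideal.span {a}) := by
  intro x hx
  rw [vcl, Submodule.mem_comap] at hx
  simp only [vop, dual] at hx
  rw [Submodule.mem_div_iff_forall_mul_mem] at hx
  have ha' : algebraMap R (FractionRing R) a ≠ 0 :=
    (map_ne_zero_iff _ (IsFractionRing.injective R (FractionRing R))).mpr ha0
  have hy : algebraMap R (FractionRing R) s * (algebraMap R (FractionRing R) a)⁻¹ ∈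
      (1 : Submodule R (FractionRing R)) / sub R (FractionRing R) J := by
    rw [Submodule.mem_div_iff_forall_mul_mem]
    rintro z ⟨b, hb, rfl⟩
    obtain ⟨c, hc⟩ := Ideal.mem_span_singleton.mp (hsall b hb)
    rw [Submodule.mem_one]
    refine ⟨c, ?_⟩
    have hlin : (Algebra.linearMap R (FractionRing R)) b = algebraMap R (FractionRing R) b := rfl
    rw [hlin]
    field_simp
    rw [← map_mul, ← map_mul]
    exact congrArg _ (by linear_combination -hc)
  have h1 := hx _ hy
  rw [Submodule.mem_one] at h1
  obtain ⟨c, hc⟩ := h1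
  refine (mem_sat hp).mpr ⟨s, hs, ?_⟩
  rw [Ideal.mem_span_singleton]
  refine ⟨c, ?_⟩
  apply IsFractionRing.injective R (FractionRing R)
  have hlin : (Algebra.linearMap R (FractionRing R)) x = algebraMap R (FractionRing R) x := rfl
  rw [hlin] at hc
  rw [map_mul, map_mul]
  field_simp at hc
  linear_combination -hc

lemma min_principal_of_min_vcl (hR : IsPvMD R) {P : Ideal R}
    (hP : IsTPrime R (FractionRing R) P) {J : Ideal R} (hJ0 : J ≠ ⊥) (hfg : J.FG)
    (hmin : P ∈ (vcl R (FractionRing R) J).minimalPrimes) :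
    ∃ a : R, a ≠ 0 ∧ P ∈ (Ideal.span {a} : Ideal R).minimalPrimes := by
  obtain ⟨S, hS⟩ := hfg
  obtain ⟨a, haJ, hle⟩ := exists_dominating_gen hR hP S
  have ha0 : a ≠ 0 := by
    rintro rfl
    apply hJ0
    rw [← hS, eq_bot_iff]
    intro b hb
    obtain ⟨t, htP, htb⟩ := (mem_sat hP.1).mp (hle hb)
    rw [Ideal.span_singleton_eq_bot.mpr rfl, Ideal.mem_bot] at htb
    have ht0 : t ≠ 0 := fun h => htP (h ▸ P.zero_mem)
    rw [Ideal.mem_bot]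
    rcases mul_eq_zero.mp htb with h | h
    · exact absurd h ht0
    · exact h
  obtain ⟨s, hs, hsall⟩ := exists_denominator hP.1 S hle
  have hvcl : vcl R (FractionRing R) J ≤ sat P hP.1 (Ideal.span {a}) :=
    vcl_le_sat hP.1 ha0 hs (fun b hb => hsall b (by rw [hS]; exact hb))
  have haP : a ∈ P := hmin.1.2 (le_vcl J (by rw [← hS] at *; exact haJ))
  refine ⟨a, ha0, ⟨⟨hP.1, (Ideal.span_singleton_le_iff_mem _).mpr haP⟩, ?_⟩⟩
  rintro q ⟨hq, haq⟩ hqP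
  exact hmin.2 ⟨hq, le_trans hvcl (sat_le_prime hP.1 hq hqP haq)⟩ hqP

end Helpers

theorem stmt_1 (hRK : ¬ IsField R) (hR : IsPvMD R)
    (P : Ideal R) (hP : IsTPrime R KK P) :
    List.TFAE [
      IsBranched R P,
      ∃ a : R, a ≠ 0 ∧ P ∈ (Ideal.span {a} : Ideal R).minimalPrimes,
      ∃ J : Ideal R, J ≠ ⊥ ∧ J.FG ∧ P ∈ J.minimalPrimes,
      ∃ J : Ideal R, J ≠ ⊥ ∧ J.FG ∧ P ∈ (vcl R KK J).minimalPrimes,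
      ¬ ((P : Set R) = ⋃ Q ∈ {Q : Ideal R | Q.IsPrime ∧ Q < P}, (Q : Set R))] := by
  tfae_have 1 → 5 := by
    rintro ⟨_, hP0, Q, hprim, hrad, hne⟩ heq
    apply hne
    apply le_antisymm (hrad ▸ Ideal.le_radical)
    intro x hx
    have hx' : x ∈ (P : Set R) := hx
    rw [heq] at hx'
    obtain ⟨q, hq, hxq⟩ := Set.mem_iUnion₂.mp hx'
    exact prime_le_primary hR hP hprim hrad hq.1 hq.2 hxq
  tfae_have 5 → 2 := by
    intro h5
    have hsub : (⋃ q ∈ {q : Ideal R | q.IsPrime ∧ q < P}, (q : Set R)) ⊆ (P : Set R) :=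
      Set.iUnion₂_subset fun q hq => fun z hz => hq.2.le hz
    have hss : ∃ a, a ∈ (P : Set R) ∧
        a ∉ (⋃ q ∈ {q : Ideal R | q.IsPrime ∧ q < P}, (q : Set R)) := by
      by_contra hcon
      push_neg at hcon
      exact h5 (Set.Subset.antisymm (fun z hz => hcon z hz) hsub)
    obtain ⟨a, haP, haU⟩ := hss
    have ha0 : a ≠ 0 := by
      rintro rfl
      exact haU (Set.mem_biUnion
        (show (⊥ : Ideal R) ∈ {q : Ideal R | q.IsPrime ∧ q < P} from
          ⟨Ideal.bot_prime, bot_lt_iff_ne_bot.mpr hP.2.1⟩) (Ideal.zero_mem ⊥))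
    refine ⟨a, ha0, ⟨⟨hP.1, (Ideal.span_singleton_le_iff_mem _).mpr haP⟩, ?_⟩⟩
    rintro q ⟨hq, haq⟩ hqP
    by_contra hPq
    have hlt : q < P := lt_of_le_of_ne hqP (fun h => hPq (h ▸ le_refl P))
    exact haU (Set.mem_biUnion
      (show q ∈ {q : Ideal R | q.IsPrime ∧ q < P} from ⟨hq, hlt⟩)
      (haq (Ideal.mem_span_singleton_self a)))
  tfae_have 2 → 3 := by
    rintro ⟨a, ha0, hmin⟩
    exact ⟨Ideal.span {a}, fun h => ha0 (Ideal.span_singleton_eq_bot.mp h),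
      Submodule.fg_span_singleton a, hmin⟩
  tfae_have 3 → 4 := by
    rintro ⟨J, hJ0, hfg, hmin⟩
    refine ⟨J, hJ0, hfg, ⟨⟨hP.1, le_trans (vcl_le_tcl hfg hJ0 hmin.1.2) (le_of_eq hP.2.2)⟩, ?_⟩⟩
    rintro q ⟨hq, hvq⟩ hqP
    exact hmin.2 ⟨hq, le_trans (le_vcl J) hvq⟩ hqP
  tfae_have 4 → 2 := by
    rintro ⟨J, hJ0, hfg, hmin⟩
    exact min_principal_of_min_vcl hR hP hJ0 hfg hmin
  tfae_have 2 → 1 := by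
    rintro ⟨a, ha0, hmin⟩
    exact branched_of_min_principal hR hP ha0 hmin
  tfae_finish


end Paper
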